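/- Let T be a self-adjoint operator on a finite-dimensional real inner product space with ‖T‖ ≤ 1 and let b be a unit vector with ⟨b, T b⟩ = −1. Then b is an eigenvector of T with eigenvalue −1, and for any unit vectors a, b̃: |⟨a, T(b − b̃)⟩| − ⟨b, T b̃⟩ ≤ 3/2. -/
import Mathlib


open RealInnerProductSpace

/-- Perfect anticorrelation version: if `T` is self-adjoint with `‖T‖ ≤ 1` and
`b` is a unit vector with `⟪b, T b⟫ = −1`, then `T b = −b` and, for all unit
vectors `a, b̃`, `|⟪a, T (b − b̃)⟫| − ⟪b, T b̃⟫ ≤ 3/2`. -/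
theorem stmt_4 {V : Type*} [NormedAddCommGroup V] [InnerProductSpace ℝ V]
    [FiniteDimensional ℝ V] (T : V →L[ℝ] V)
    (hsym : ∀ x y : V, ⟪T x, y⟫ = ⟪x, T y⟫) (hnorm : ‖T‖ ≤ 1)
    (b : V) (hb : ‖b‖ = 1) (hperf : ⟪b, T b⟫ = -1) :
    T b = -b ∧
      ∀ a btil : V, ‖a‖ = 1 → ‖btil‖ = 1 →
        |⟪a, T (b - btil)⟫| - ⟪b, T btil⟫ ≤ 3 / 2 := by
  have hTb : T b = -b := by
    have h1 : ‖T b‖ ≤ 1 := by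
      calc ‖T b‖ ≤ ‖T‖ * ‖b‖ := T.le_opNorm b
        _ ≤ 1 := by rw [hb]; simpa using hnorm
    have h2 : ‖T b + b‖ ^ 2 ≤ 0 := by
      rw [norm_add_sq_real, real_inner_comm, hperf, hb]
      nlinarith [norm_nonneg (T b), h1]
    have h3 : T b + b = 0 := by
      have hn : ‖T b + b‖ = 0 := by nlinarith [norm_nonneg (T b + b)]
      exact norm_eq_zero.mp hn
    exact eq_neg_of_add_eq_zero_left h3
  refine ⟨hTb, fun a btil ha hbtil => ?_⟩
  set t := ⟪b, btil⟫ with ht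
  have htle : t ≤ 1 := by
    have h := real_inner_le_norm b btil
    rw [hb, hbtil] at h; simpa using h
  have hbT : ⟪b, T btil⟫ = -t := by
    rw [← hsym, hTb, inner_neg_left]
  have hTbtil : ‖T btil‖ ≤ 1 := by
    calc ‖T btil‖ ≤ ‖T‖ * ‖btil‖ := T.le_opNorm btil
      _ ≤ 1 := by rw [hbtil]; simpa using hnorm
  have hineq : |⟪a, T (b - btil)⟫| ≤ ‖b + T btil‖ := by
    have hx : T (b - btil) = -(b + T btil) := by
      rw [map_sub, hTb]; abel
    calc |⟪a, T (b - btil)⟫| ≤ ‖a‖ * ‖T (b - btil)‖ := abs_real_inner_le_norm _ _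
      _ = ‖T (b - btil)‖ := by rw [ha, one_mul]
      _ = ‖b + T btil‖ := by rw [hx, norm_neg]
  have hsq : ‖b + T btil‖ ^ 2 ≤ 2 - 2 * t := by
    rw [norm_add_sq_real, hb, hbT]
    nlinarith [norm_nonneg (T btil), hTbtil]
  have hkey : ‖b + T btil‖ ≤ 3 / 2 - t := by
    nlinarith [norm_nonneg (b + T btil), sq_nonneg (t - 1 / 2)]
  rw [hbT]
  linarith
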